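/- arXiv:2308.02276 — 3 statements merged into one kernel-verified Lean document; each statement's English description precedes it below -/
import Mathlib

section
/- Let p > 1, c₁ > 0, and v ≥ 0. Define f̃(y) = -v·|y|^p for y ≥ -c₁ and f̃(y) = v·c₁^(p-1)·(p·y + (p-1)·c₁) for y < -c₁ (the linearization of -v|y|^p below -c₁). Then f̃ is monotone: for all y, y' ∈ ℝ, (y - y')·(f̃(y) - f̃(y')) ≤ p·v·c₁^(p-1)·(y - y')². -/
private lemma mvt_key (p : ℝ) (hp : 1 < p) {a b c : ℝ} (hb : 0 ≤ b) (hba : b ≤ a)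
    (hac : a ≤ c) : a ^ p - b ^ p ≤ p * c ^ (p - 1) * (a - b) := by
  rcases eq_or_lt_of_le hba with rfl | hlt
  · norm_num
  · have hcont : ContinuousOn (fun x : ℝ => x ^ p) (Set.Icc b a) := by
      intro x _
      exact ((Real.hasDerivAt_rpow_const (p := p) (Or.inr hp.le)).continuousAt).continuousWithinAt
    have hderiv : ∀ x ∈ Set.Ioo b a, HasDerivAt (fun x : ℝ => x ^ p) (p * x ^ (p - 1)) x :=
      fun x _ => Real.hasDerivAt_rpow_const (Or.inr hp.le)
    obtain ⟨ξ, hξ, hslope⟩ := exists_hasDerivAt_eq_slope (fun x : ℝ => x ^ p)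
      (fun x => p * x ^ (p - 1)) hlt hcont hderiv
    have heq : a ^ p - b ^ p = p * ξ ^ (p - 1) * (a - b) := by
      have hne : a - b ≠ 0 := sub_ne_zero.mpr hlt.ne'
      rw [eq_div_iff hne] at hslope
      linarith [hslope]
    rw [heq]
    have hξ0 : 0 ≤ ξ := le_trans hb hξ.1.le
    have hξc : ξ ≤ c := le_trans hξ.2.le hac
    have : ξ ^ (p - 1) ≤ c ^ (p - 1) := Real.rpow_le_rpow hξ0 hξc (by linarith)
    have hp0 : (0:ℝ) ≤ p := by linarith
    have h4 : p * ξ ^ (p - 1) ≤ p * c ^ (p - 1) := mul_le_mul_of_nonneg_left this hp0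
    exact mul_le_mul_of_nonneg_right h4 (by linarith)

theorem stmt_3
    (p c₁ v : ℝ) (hp : 1 < p) (hc : 0 < c₁) (hv : 0 ≤ v)
    (f : ℝ → ℝ)
    (hf : ∀ y : ℝ, f y =
      if -c₁ ≤ y then -v * |y| ^ p
      else v * c₁ ^ (p - 1) * (p * y + (p - 1) * c₁)) :
    ∀ y y' : ℝ, (y - y') * (f y - f y') ≤ p * v * c₁ ^ (p - 1) * (y - y') ^ 2 := by
  set L : ℝ := p * v * c₁ ^ (p - 1) with hL
  have hL0 : 0 ≤ L := by
    have : (0:ℝ) ≤ c₁ ^ (p - 1) := Real.rpow_nonneg hc.le _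
    positivity
  -- key monotonicity on [-c₁, ∞)
  have keyA : ∀ y y' : ℝ, -c₁ ≤ y → y ≤ y' →
      v * (|y| ^ p - |y'| ^ p) ≤ L * (y' - y) := by
    intro y y' hy hyy'
    rcases le_or_gt 0 y with h0 | h0
    · have h1 : |y| = y := abs_of_nonneg h0
      have h2 : |y'| = y' := abs_of_nonneg (le_trans h0 hyy')
      have : y ^ p ≤ y' ^ p := Real.rpow_le_rpow h0 hyy' (by linarith)
      rw [h1, h2]
      have := mul_nonneg hL0 (sub_nonneg.mpr hyy')
      nlinarith
    · set a : ℝ := -y with ha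
      set b : ℝ := max 0 (-y') with hb
      have hb0 : 0 ≤ b := le_max_left _ _
      have hba : b ≤ a := max_le (by linarith) (by linarith)
      have hac : a ≤ c₁ := by simp only [ha]; linarith
      have hkey := mvt_key p hp hb0 hba hac
      have hya : |y| = a := abs_of_neg h0
      have hby' : b ≤ |y'| := max_le (abs_nonneg _) (neg_le_abs _)
      have hbp : b ^ p ≤ |y'| ^ p := Real.rpow_le_rpow hb0 hby' (by linarith)
      have hab : a - b ≤ y' - y := by
        have : -y' ≤ b := le_max_right _ _
        simp only [ha]; linarith
      have h1 : v * (|y| ^ p - |y'| ^ p) ≤ v * (a ^ p - b ^ p) := by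
        rw [hya]; nlinarith
      have h2 : v * (a ^ p - b ^ p) ≤ v * (p * c₁ ^ (p - 1) * (a - b)) := by nlinarith
      have h3 : v * (p * c₁ ^ (p - 1) * (a - b)) ≤ L * (y' - y) := by
        rw [hL]
        have hc1p : (0:ℝ) ≤ c₁ ^ (p - 1) := Real.rpow_nonneg hc.le _
        nlinarith
      linarith
  -- monotonicity of g y = L*y - f y
  have gmono : ∀ y y' : ℝ, y ≤ y' → L * y - f y ≤ L * y' - f y' := by
    intro y y' hyy'
    rcases le_or_gt (-c₁) y with hy | hy
    · have hy' : -c₁ ≤ y' := le_trans hy hyy'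
      rw [hf y, hf y', if_pos hy, if_pos hy']
      have := keyA y y' hy hyy'
      nlinarith
    · rcases le_or_gt (-c₁) y' with hy' | hy'
      · -- y < -c₁ ≤ y' : use g y = g (-c₁) and keyA from -c₁
        have h1 : L * y - f y = L * (-c₁) - f (-c₁) := by
          rw [hf y, hf (-c₁), if_neg (not_le.mpr hy), if_pos le_rfl]
          have : |(-c₁)| = c₁ := by rw [abs_neg, abs_of_pos hc]
          rw [this]
          have hc1p : c₁ ^ p = c₁ ^ (p - 1) * c₁ := by
            rw [← Real.rpow_add_one hc.ne' (p - 1)]; ring_nf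
          rw [hL, hc1p]; ring
        rw [h1, hf (-c₁), hf y', if_pos le_rfl, if_pos hy']
        have habs : |(-c₁)| = c₁ := by rw [abs_neg, abs_of_pos hc]
        have := keyA (-c₁) y' le_rfl hy'
        rw [habs] at this ⊢
        nlinarith
      · -- both below -c₁: g constant
        rw [hf y, hf y', if_neg (not_le.mpr hy), if_neg (not_le.mpr hy'), hL]
        ring_nf
        linarith [le_refl (0:ℝ)]
  intro y y'
  rcases le_total y' y with h | h
  · have := gmono y' y h
    nlinarith [sub_nonneg.mpr h]
  · have := gmono y y' h
    nlinarith [sub_nonneg.mpr h]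
end

section
/- Let T > 0, vol : [0,T] → (0,∞) continuous, and let Y : [0,T] → ℝ be a differentiable solution of Y'(t) = vol(t)·Y(t)² with Y(T) = ξ for some ξ ∈ ℝ. Let Q*(t) = Q₀·exp(-∫₀ᵗ Y(s)·vol(s) ds). Then the function t ↦ Y(t)·Q*(t)² satisfies d/dt(Y(t)Q*(t)²) = -vol(t)·(Y(t)·Q*(t))² = -(Q*'(t))²/vol(t), and consequently Y(0)·Q₀² = ∫₀ᵀ (Q*'(s))²/vol(s) ds + ξ·Q*(T)². -/
open MeasureTheory Set intervalIntegral

theorem stmt_12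
    (T ξ Q₀ : ℝ) (hT : 0 < T)
    (vol : ℝ → ℝ) (hvol_cont : Continuous vol)
    (hvol_pos : ∀ t ∈ Icc (0:ℝ) T, 0 < vol t)
    (Y : ℝ → ℝ)
    (hY : ∀ t, HasDerivAt Y (vol t * (Y t) ^ 2) t)
    (hYT : Y T = ξ)
    (Qstar : ℝ → ℝ)
    (hQstar : ∀ t, Qstar t = Q₀ * Real.exp (-∫ s in (0:ℝ)..t, Y s * vol s)) :
    (∀ t ∈ Icc (0:ℝ) T,
      HasDerivAt (fun u => Y u * (Qstar u) ^ 2)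
        (-(vol t) * (Y t * Qstar t) ^ 2) t) ∧
    Y 0 * Q₀ ^ 2 =
      (∫ s in (0:ℝ)..T, (-(Y s * vol s * Qstar s)) ^ 2 / vol s) +
        ξ * (Qstar T) ^ 2 := by
  have hYcont : Continuous Y := by
    rw [continuous_iff_continuousAt]; exact fun t => (hY t).continuousAt
  have hg : Continuous (fun s => Y s * vol s) := hYcont.mul hvol_cont
  -- derivative of the integral
  have hint : ∀ t : ℝ, HasDerivAt (fun u => ∫ s in (0:ℝ)..u, Y s * vol s)
      (Y t * vol t) t := fun t =>
    intervalIntegral.integral_hasDerivAt_right (hg.intervalIntegrable _ _)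
      (hg.stronglyMeasurableAtFilter _ _) hg.continuousAt
  have hQfun : Qstar = fun t => Q₀ * Real.exp (-∫ s in (0:ℝ)..t, Y s * vol s) :=
    funext hQstar
  have hQ' : ∀ t : ℝ, HasDerivAt Qstar (-(Y t * vol t) * Qstar t) t := by
    intro t
    rw [hQfun]
    have := (((hint t).neg).exp).const_mul Q₀
    refine this.congr_deriv ?_
    simp only [Pi.neg_apply]
    ring
  have hQcont : Continuous Qstar := by
    rw [continuous_iff_continuousAt]; exact fun t => (hQ' t).continuousAt
  have hF : ∀ t : ℝ, HasDerivAt (fun u => Y u * (Qstar u) ^ 2)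
      (-(vol t) * (Y t * Qstar t) ^ 2) t := by
    intro t
    have := (hY t).mul ((hQ' t).pow 2)
    refine this.congr_deriv ?_
    simp only [Pi.pow_apply]
    ring
  refine ⟨fun t _ => hF t, ?_⟩
  have hF'cont : Continuous (fun t => -(vol t) * (Y t * Qstar t) ^ 2) :=
    (hvol_cont.neg).mul ((hYcont.mul hQcont).pow 2)
  have key : (∫ s in (0:ℝ)..T, -(vol s) * (Y s * Qstar s) ^ 2)
      = Y T * (Qstar T) ^ 2 - Y 0 * (Qstar 0) ^ 2 :=
    intervalIntegral.integral_eq_sub_of_hasDerivAt (fun t _ => hF t)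
      (hF'cont.intervalIntegrable _ _)
  have hQ0 : Qstar 0 = Q₀ := by
    rw [hQstar 0, intervalIntegral.integral_same, neg_zero, Real.exp_zero, mul_one]
  have hcongr : (∫ s in (0:ℝ)..T, (-(Y s * vol s * Qstar s)) ^ 2 / vol s)
      = ∫ s in (0:ℝ)..T, -(-(vol s) * (Y s * Qstar s) ^ 2) := by
    apply intervalIntegral.integral_congr
    intro s hs
    rw [uIcc_of_le hT.le] at hs
    have hv : vol s ≠ 0 := (hvol_pos s hs).ne'
    field_simp
  rw [hcongr, intervalIntegral.integral_neg, key, hYT, hQ0]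
  ring
end

section
/- Let p̂ = p = 2, T > 0, K > 0 and vol : [0,T] → [0, V̄] measurable with K·T·V̄ < 1. Let Y : [0,T] → ℝ be any continuous function satisfying the integral equation Y(t) = Y(r) + ∫ₜʳ vol(s)·|Y(s)|² ds for all 0 ≤ t ≤ r ≤ T together with Y(T) ≥ -K. Then Y(t) ≥ z(t) for all t ∈ [0,T], where z(t) = -(1/K - V̄·(T-t))⁻¹. -/
open MeasureTheory Set intervalIntegral

theorem stmt_17
    (T K Vbar : ℝ) (hT : 0 < T) (hK : 0 < K) (hV : 0 < Vbar)
    (hbal : K * T * Vbar < 1)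
    (vol : ℝ → ℝ) (hvol_meas : Measurable vol)
    (hvol_nonneg : ∀ t ∈ Icc (0:ℝ) T, 0 ≤ vol t)
    (hvol_bdd : ∀ t ∈ Icc (0:ℝ) T, vol t ≤ Vbar)
    (Y : ℝ → ℝ) (hY_cont : ContinuousOn Y (Icc 0 T))
    (hY_eq : ∀ t r : ℝ, 0 ≤ t → t ≤ r → r ≤ T →
      Y t = Y r + ∫ s in t..r, vol s * |Y s| ^ 2)
    (hYT : -K ≤ Y T)
    (z : ℝ → ℝ) (hz : ∀ t, z t = -(1 / K - Vbar * (T - t))⁻¹) :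
    ∀ t ∈ Icc (0:ℝ) T, z t ≤ Y t := by
  rintro t ⟨ht0, htT⟩
  -- z t ≤ -K
  have hden_pos : 0 < 1 / K - Vbar * (T - t) := by
    have h1 : Vbar * (T - t) ≤ Vbar * T := by nlinarith
    have h2 : Vbar * T < 1 / K := by
      rw [lt_div_iff₀ hK]; nlinarith
    linarith
  have hden_le : 1 / K - Vbar * (T - t) ≤ 1 / K := by nlinarith
  have hzK : z t ≤ -K := by
    rw [hz]
    have : K ≤ (1 / K - Vbar * (T - t))⁻¹ := by
      rw [le_inv_comm₀ hK hden_pos] at *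
      calc 1 / K - Vbar * (T - t) ≤ 1 / K := hden_le
        _ = K⁻¹ := one_div K
    linarith
  -- Y T ≤ Y t
  have hint : 0 ≤ ∫ s in t..T, vol s * |Y s| ^ 2 := by
    apply intervalIntegral.integral_nonneg htT
    intro u hu
    have hu' : u ∈ Icc (0:ℝ) T := ⟨le_trans ht0 hu.1, hu.2⟩
    exact mul_nonneg (hvol_nonneg u hu') (by positivity)
  have hYt : Y T ≤ Y t := by
    rw [hY_eq t T ht0 htT le_rfl]; linarith
  linarith
end
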